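/- Let G be a complete bipartite graph with parts P (all label 1) and Q (all label 2), |P| = p, |Q| = q with p, q ≥ 1. Let Â_rw = (D+I)^{-1}(A+I) be the random walk renormalized affinity matrix. Then the post-aggregation similarity matrix S = (Â_rw Z)(Â_rw Z)^T satisfies: for every node v, the mean of S_{v,u} over nodes u with the same label as v is greater than or equal to the mean of S_{v,u} over nodes u with a different label. Hence the aggregation homophily H_agg(G) = 1 while the edge homophily H_edge(G) = 0. -/

import Mathlib

open scoped Classical

set_option maxHeartbeats 1000000 in
/-- For the complete bipartite graph `K_{p,q}` (parts labelled 1 and 2, one-hot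
label matrix `Z`), with `Â_rw = (D+I)⁻¹(A+I)` and post-aggregation similarity
matrix `S = (Â_rw Z)(Â_rw Z)ᵀ`: for every node `v` the mean of `S_{v,u}` over
same-label `u` is at least the mean over different-label `u`; hence the
aggregation homophily `H_agg(G) = 1` while the edge homophily `H_edge(G) = 0`. -/
theorem stmt15 (p q : ℕ) (hp : 1 ≤ p) (hq : 1 ≤ q) :
    let V := Fin p ⊕ Fin q
    let A : Matrix V V ℝ := fun u v => if u.isLeft ≠ v.isLeft then 1 else 0
    let deg : V → ℝ := fun u => if u.isLeft then (q : ℝ) else (p : ℝ)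
    let Ahat : Matrix V V ℝ := Matrix.diagonal (fun u => (deg u + 1)⁻¹) * (A + 1)
    let Z : Matrix V (Fin 2) ℝ :=
      fun u j => if (u.isLeft ∧ j = 0) ∨ (¬ u.isLeft ∧ j = 1) then 1 else 0
    let S : Matrix V V ℝ := (Ahat * Z) * (Ahat * Z).transpose
    let sameMean : V → ℝ := fun v =>
      (∑ u ∈ Finset.univ.filter fun u : V => u.isLeft = v.isLeft, S v u) /
        ((Finset.univ.filter fun u : V => u.isLeft = v.isLeft).card : ℝ)
    let diffMean : V → ℝ := fun v =>
      (∑ u ∈ Finset.univ.filter fun u : V => u.isLeft ≠ v.isLeft, S v u) /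
        ((Finset.univ.filter fun u : V => u.isLeft ≠ v.isLeft).card : ℝ)
    (∀ v : V, diffMean v ≤ sameMean v) ∧
      ((Finset.univ.filter fun v : V => diffMean v ≤ sameMean v).card : ℝ) /
          ((p : ℝ) + q) = 1 ∧
      ((Finset.univ.filter fun uv : V × V =>
            uv.1.isLeft ≠ uv.2.isLeft ∧ uv.1.isLeft = uv.2.isLeft).card : ℝ) /
          ((Finset.univ.filter fun uv : V × V => uv.1.isLeft ≠ uv.2.isLeft).card : ℝ)
        = 0 := by
  intro V A deg Ahat Z S sameMean diffMean
  have hp0 : (0:ℝ) < p := by exact_mod_cast hp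
  have hq0 : (0:ℝ) < q := by exact_mod_cast hq
  have hB : ∀ (v : V) (j : Fin 2), (Ahat * Z) v j =
      (deg v + 1)⁻¹ * ∑ w : V, (A v w + if v = w then 1 else 0) * Z w j := by
    intro v j
    simp only [Matrix.mul_apply, Ahat, Matrix.add_apply, Matrix.one_apply,
      Matrix.diagonal_apply, ite_mul, zero_mul, Finset.sum_ite_eq, Finset.sum_ite_eq', Finset.mem_univ,
      if_pos, Finset.mul_sum, mul_assoc]
    refine Finset.sum_congr rfl fun x _ => ?_
    rw [Finset.sum_eq_single v (by intro b _ hb; simp [Ne.symm hb]) (by simp)]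
    simp [mul_assoc]
  have hBL0 : ∀ i : Fin p, (Ahat * Z) (Sum.inl i) 0 = ((q:ℝ)+1)⁻¹ := by
    intro i
    rw [hB]
    simp only [V]
    simp [A, Z, deg, Fintype.sum_sum_type, Finset.sum_ite_eq, Sum.inl.injEq]
  have hBL1 : ∀ i : Fin p, (Ahat * Z) (Sum.inl i) 1 = q * ((q:ℝ)+1)⁻¹ := by
    intro i
    rw [hB]
    simp only [V]
    simp [A, Z, deg, Fintype.sum_sum_type, mul_comm]
  have hBR0 : ∀ i : Fin q, (Ahat * Z) (Sum.inr i) 0 = p * ((p:ℝ)+1)⁻¹ := by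
    intro i
    rw [hB]
    simp only [V]
    simp [A, Z, deg, Fintype.sum_sum_type, mul_comm]
  have hBR1 : ∀ i : Fin q, (Ahat * Z) (Sum.inr i) 1 = ((p:ℝ)+1)⁻¹ := by
    intro i
    rw [hB]
    simp only [V]
    simp [A, Z, deg, Fintype.sum_sum_type, Finset.sum_ite_eq, Sum.inr.injEq]
  have hS : ∀ v u : V, S v u =
      (Ahat * Z) v 0 * (Ahat * Z) u 0 + (Ahat * Z) v 1 * (Ahat * Z) u 1 := by
    intro v u
    show ((Ahat * Z) * (Ahat * Z).transpose) v u = _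
    rw [Matrix.mul_apply, Fin.sum_univ_two, Matrix.transpose_apply, Matrix.transpose_apply]
  set sLL : ℝ := ((q:ℝ)+1)⁻¹ * ((q:ℝ)+1)⁻¹ + (q * ((q:ℝ)+1)⁻¹) * (q * ((q:ℝ)+1)⁻¹) with hsLL
  set sRR : ℝ := (p * ((p:ℝ)+1)⁻¹) * (p * ((p:ℝ)+1)⁻¹) + ((p:ℝ)+1)⁻¹ * ((p:ℝ)+1)⁻¹ with hsRR
  set sLR : ℝ := ((q:ℝ)+1)⁻¹ * (p * ((p:ℝ)+1)⁻¹) + (q * ((q:ℝ)+1)⁻¹) * ((p:ℝ)+1)⁻¹ with hsLR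
  have hSLL : ∀ (i : Fin p) (k : Fin p), S (Sum.inl i) (Sum.inl k) = sLL := by
    intro i k; rw [hS, hBL0, hBL0, hBL1, hBL1]
  have hSRR : ∀ (i : Fin q) (k : Fin q), S (Sum.inr i) (Sum.inr k) = sRR := by
    intro i k; rw [hS, hBR0, hBR0, hBR1, hBR1]
  have hSLR : ∀ (i : Fin p) (k : Fin q), S (Sum.inl i) (Sum.inr k) = sLR := by
    intro i k; rw [hS, hBL0, hBR0, hBL1, hBR1]
  have hSRL : ∀ (i : Fin q) (k : Fin p), S (Sum.inr i) (Sum.inl k) = sLR := by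
    intro i k; rw [hS, hBR0, hBL0, hBR1, hBL1, hsLR]; ring
  -- means
  have hsameL : ∀ i : Fin p, sameMean (Sum.inl i) = sLL := by
    intro i
    simp only [sameMean, Finset.sum_filter, Finset.card_filter]
    rw [Fintype.sum_sum_type, Fintype.sum_sum_type]
    simp [hSLL, Finset.sum_ite_eq, Sum.isLeft, hp0.ne', mul_div_assoc, div_self hp0.ne']
  have hsameR : ∀ i : Fin q, sameMean (Sum.inr i) = sRR := by
    intro i
    simp only [sameMean, Finset.sum_filter, Finset.card_filter]
    rw [Fintype.sum_sum_type, Fintype.sum_sum_type]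
    simp [hSRR, Sum.isLeft, hq0.ne', mul_div_assoc, div_self hq0.ne']
  have hdiffL : ∀ i : Fin p, diffMean (Sum.inl i) = sLR := by
    intro i
    simp only [diffMean, Finset.sum_filter, Finset.card_filter]
    rw [Fintype.sum_sum_type, Fintype.sum_sum_type]
    simp [hSLR, Sum.isLeft, hq0.ne', mul_div_assoc, div_self hq0.ne']
  have hdiffR : ∀ i : Fin q, diffMean (Sum.inr i) = sLR := by
    intro i
    simp only [diffMean, Finset.sum_filter, Finset.card_filter]
    rw [Fintype.sum_sum_type, Fintype.sum_sum_type]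
    simp [hSRL, Sum.isLeft, hp0.ne', mul_div_assoc, div_self hp0.ne']
  have hq1 : (0:ℝ) < (q:ℝ) + 1 := by linarith
  have hp1 : (0:ℝ) < (p:ℝ) + 1 := by linarith
  have eLL : sLL = (1 + (q:ℝ)^2) / (((q:ℝ)+1)^2) := by
    rw [hsLL]; field_simp
  have eRR : sRR = ((p:ℝ)^2 + 1) / (((p:ℝ)+1)^2) := by
    rw [hsRR]; field_simp
  have eLR : sLR = ((p:ℝ) + q) / (((p:ℝ)+1) * ((q:ℝ)+1)) := by
    rw [hsLR, eq_div_iff (by positivity)]; field_simp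
  have hA1 : (1:ℝ) ≤ p := by exact_mod_cast hp
  have hB1 : (1:ℝ) ≤ q := by exact_mod_cast hq
  have hpq1 : (1:ℝ) ≤ (p:ℝ) * q := by nlinarith
  have h1 : sLR ≤ sLL := by
    rw [eLR, eLL, div_le_div_iff₀ (by positivity) (by positivity)]
    have e : (1 + (q:ℝ)^2) * (((p:ℝ)+1) * ((q:ℝ)+1)) - ((p:ℝ) + q) * (((q:ℝ)+1)^2)
        = ((q:ℝ)+1) * (((q:ℝ)-1) * ((p:ℝ)*q-1)) := by ring
    nlinarith [mul_nonneg hq1.le (mul_nonneg (sub_nonneg.2 hB1) (sub_nonneg.2 hpq1)), e]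
  have h2 : sLR ≤ sRR := by
    rw [eLR, eRR, div_le_div_iff₀ (by positivity) (by positivity)]
    have e : ((p:ℝ)^2 + 1) * (((p:ℝ)+1) * ((q:ℝ)+1)) - ((p:ℝ) + q) * (((p:ℝ)+1)^2)
        = ((p:ℝ)+1) * (((p:ℝ)-1) * ((p:ℝ)*q-1)) := by ring
    nlinarith [mul_nonneg hp1.le (mul_nonneg (sub_nonneg.2 hA1) (sub_nonneg.2 hpq1)), e]
  have key : ∀ v : V, diffMean v ≤ sameMean v := by
    rintro (i | i)
    · rw [hdiffL, hsameL]; exact h1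
    · rw [hdiffR, hsameR]; exact h2
  refine ⟨key, ?_, ?_⟩
  · rw [Finset.filter_true_of_mem (fun v _ => key v), Finset.card_univ]
    have : Fintype.card V = p + q := by
      simp [V, Fintype.card_sum]
    rw [this]
    push_cast
    exact div_self (by positivity)
  · rw [Finset.filter_false_of_mem (fun x _ h => h.1 h.2)]
    simp
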